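/- Let A be a real d×d Hurwitz matrix (all eigenvalues of A have strictly negative real part) and ω ∈ ℝ. Then the matrix A − iωI_d (viewed as a complex d×d matrix) is invertible, and Ŝ_A(ω) = −(1/π) Re((A − iωI_d)^{−1}), where Re denotes the entrywise real part. -/

import Mathlib

open MeasureTheory
open scoped Matrix

/-- The matrix-valued cosine transform `Ŝ_A(ω) = (1/π)∫₀^∞ e^{tA} cos ωt dt`,
defined entrywise. -/
noncomputable def cosTransform {d : ℕ} (A : Matrix (Fin d) (Fin d) ℝ) (ω : ℝ) :
    Matrix (Fin d) (Fin d) ℝ :=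
  Matrix.of fun i j => (1 / Real.pi) * ∫ t in Set.Ioi (0 : ℝ),
    Real.cos (ω * t) * (NormedSpace.exp (t • A)) i j

section Aux

open NormedSpace
open scoped NNReal ENNReal

set_option maxHeartbeats 1000000

attribute [local instance] Matrix.linftyOpSemiNormedRing Matrix.linftyOpNormedRing
  Matrix.linftyOpNormedAlgebra

variable {d : ℕ}
local notation "Mat" => Matrix (Fin d) (Fin d) ℂ

namespace HurwitzAux

noncomputable def matContENorm : ContinuousENorm Mat := SeminormedAddGroup.toContinuousENorm

attribute [local instance] matContENorm

noncomputable def matPMS : TopologicalSpace.PseudoMetrizableSpace Mat :=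
  inferInstanceAs (TopologicalSpace.PseudoMetrizableSpace (Fin d → Fin d → ℂ))

attribute [local instance] matPMS

noncomputable def mvCLM (v : Fin d → ℂ) : Mat →L[ℂ] (Fin d → ℂ) :=
  LinearMap.toContinuousLinearMap
    { toFun := fun M => M *ᵥ v
      map_add' := fun M N => Matrix.add_mulVec M N v
      map_smul' := fun c M => Matrix.smul_mulVec c M v }

@[simp] lemma mvCLM_apply (v : Fin d → ℂ) (M : Mat) : mvCLM v M = M *ᵥ v := rfl

lemma pow_mulVec {B : Mat} {lam : ℂ} {v : Fin d → ℂ} (hv : B *ᵥ v = lam • v) (n : ℕ) :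
    (B ^ n) *ᵥ v = lam ^ n • v := by
  induction n with
  | zero => simp [Matrix.one_mulVec]
  | succ n ih =>
      rw [pow_succ, ← Matrix.mulVec_mulVec, hv, Matrix.mulVec_smul, ih, smul_smul, pow_succ]
      ring_nf

lemma aeval_mulVec {B : Mat} {lam : ℂ} {v : Fin d → ℂ} (hv : B *ᵥ v = lam • v)
    (p : Polynomial ℂ) : (Polynomial.aeval B p) *ᵥ v = p.eval lam • v := by
  have h1 : (Polynomial.aeval B p) *ᵥ v = mvCLM v (Polynomial.aeval B p) := rfl
  rw [h1, Polynomial.aeval_eq_sum_range, map_sum]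
  have h2 : ∀ k : ℕ, mvCLM v (p.coeff k • B ^ k) = (p.coeff k * lam ^ k) • v := by
    intro k
    simp [Matrix.smul_mulVec, pow_mulVec hv k, smul_smul]
  simp_rw [h2, ← Finset.sum_smul]
  congr 1
  rw [Polynomial.eval_eq_sum_range]

lemma exp_mulVec {B : Mat} {lam : ℂ} {v : Fin d → ℂ} (hv : B *ᵥ v = lam • v) :
    (exp B) *ᵥ v = Complex.exp lam • v := by
  have h1 : (exp B) *ᵥ v = mvCLM v (exp B) := rfl
  rw [h1, exp_eq_tsum ℂ]
  beta_reduce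
  have hmt : mvCLM v (∑' n : ℕ, (n.factorial⁻¹ : ℂ) • B ^ n)
      = ∑' n : ℕ, mvCLM v ((n.factorial⁻¹ : ℂ) • B ^ n) :=
    ContinuousLinearMap.map_tsum _ (expSeries_summable' B)
  rw [hmt]
  have h2 : ∀ n : ℕ, mvCLM v ((n.factorial⁻¹ : ℂ) • B ^ n)
      = ((n.factorial⁻¹ : ℂ) * lam ^ n) • v := by
    intro n
    simp [Matrix.smul_mulVec, pow_mulVec hv n, smul_smul]
  simp_rw [h2]
  rw [Summable.tsum_smul_const ?_ v]
  · congr 1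
    rw [Complex.exp_eq_exp_ℂ, exp_eq_tsum ℂ]
    simp [smul_eq_mul]
  · simpa [smul_eq_mul] using expSeries_summable' (𝕂 := ℂ) lam

lemma exists_eigen {B : Mat} {lam : ℂ} (h : lam ∈ spectrum ℂ B) :
    ∃ v : Fin d → ℂ, v ≠ 0 ∧ B *ᵥ v = lam • v := by
  rw [spectrum.mem_iff] at h
  have hdet : (algebraMap ℂ Mat lam - B).det = 0 := by
    by_contra hd
    exact h ((Matrix.isUnit_iff_isUnit_det _).mpr (isUnit_iff_ne_zero.mpr hd))
  obtain ⟨v, hv, hmul⟩ := (Matrix.exists_mulVec_eq_zero_iff).mpr hdet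
  refine ⟨v, hv, ?_⟩
  have := hmul
  rw [Matrix.sub_mulVec, Algebra.algebraMap_eq_smul_one, Matrix.smul_mulVec,
    Matrix.one_mulVec, sub_eq_zero] at this
  exact this.symm

lemma exp_mem_aeval (B : Mat) : ∃ p : Polynomial ℂ, exp B = Polynomial.aeval B p := by
  set S : Subalgebra ℂ Mat := Algebra.adjoin ℂ ({B} : Set Mat) with hS
  have hBS : B ∈ S := Algebra.subset_adjoin rfl
  have hterm : ∀ n : ℕ, (n.factorial⁻¹ : ℂ) • B ^ n ∈ S := fun n =>
    S.toSubmodule.smul_mem _ (S.pow_mem hBS n)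
  have hpart : ∀ n : ℕ, ∑ k ∈ Finset.range n, (k.factorial⁻¹ : ℂ) • B ^ k ∈ S := fun n =>
    S.toSubmodule.sum_mem (fun k _ => hterm k)
  have hclosed : IsClosed (S.toSubmodule : Set Mat) :=
    Submodule.closed_of_finiteDimensional _
  have hsum : HasSum (fun n : ℕ => (n.factorial⁻¹ : ℂ) • B ^ n) (exp B) := by
    rw [exp_eq_tsum ℂ]
    exact (expSeries_summable' B).hasSum
  have hmem : exp B ∈ S :=
    hclosed.mem_of_tendsto hsum.tendsto_sum_nat (Filter.Eventually.of_forall hpart)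
  rw [hS, Algebra.adjoin_singleton_eq_range_aeval] at hmem
  obtain ⟨p, hp⟩ := hmem
  exact ⟨p, hp.symm⟩

lemma matrix_nontrivial (hd : 0 < d) : Nontrivial Mat := by
  refine ⟨0, 1, fun h => ?_⟩
  have := congrFun (congrFun h ⟨0, hd⟩) ⟨0, hd⟩
  simp [Matrix.one_apply] at this

lemma spectrum_exp_mem {B : Mat} (hd : 0 < d) {μ : ℂ} (hμ : μ ∈ spectrum ℂ (exp B)) :
    ∃ lam ∈ spectrum ℂ B, μ = Complex.exp lam := by
  haveI : Nontrivial Mat := matrix_nontrivial hd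
  obtain ⟨p, hp⟩ := exp_mem_aeval B
  rw [hp, spectrum.map_polynomial_aeval_of_nonempty B p (spectrum.nonempty B)] at hμ
  obtain ⟨lam, hlam, hev⟩ := hμ
  refine ⟨lam, hlam, ?_⟩
  obtain ⟨v, hv, hvec⟩ := exists_eigen hlam
  have h1 : (exp B) *ᵥ v = Complex.exp lam • v := exp_mulVec hvec
  have h2 : (exp B) *ᵥ v = p.eval lam • v := by rw [hp]; exact aeval_mulVec hvec p
  have h3 : (μ - Complex.exp lam) • v = 0 := by
    rw [sub_smul, ← hev, ← h2, h1, sub_self]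
  rcases smul_eq_zero.mp h3 with h | h
  · exact (sub_eq_zero.mp h)
  · exact absurd h hv

lemma norm_pow_le (E : Mat) (hlt : spectralRadius ℂ E < 1) :
    ∃ (C : ℝ) (ρ : ℝ), 1 ≤ C ∧ 0 < ρ ∧ ρ < 1 ∧ ∀ n : ℕ, ‖E ^ n‖ ≤ C * ρ ^ n := by
  obtain ⟨ρ, hρ1, hρ2⟩ := ENNReal.lt_iff_exists_nnreal_btwn.mp hlt
  have hρpos : (0 : ℝ) < (ρ : ℝ) := by
    have h0 : (0 : ENNReal) < (ρ : ENNReal) := lt_of_le_of_lt zero_le hρ1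
    exact_mod_cast h0
  have hρlt : (ρ : ℝ) < 1 := by exact_mod_cast hρ2
  have hg := spectrum.pow_nnnorm_pow_one_div_tendsto_nhds_spectralRadius E
  have hev : ∀ᶠ n : ℕ in Filter.atTop,
      (‖E ^ n‖₊ : ENNReal) ^ (1 / (n : ℝ)) < (ρ : ENNReal) :=
    hg.eventually_lt_const hρ1
  obtain ⟨N, hN⟩ := (hev.and (Filter.eventually_ge_atTop 1)).exists_forall_of_atTop
  have hbound : ∀ n, N ≤ n → ‖E ^ n‖ ≤ (ρ : ℝ) ^ n := by
    intro n hn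
    obtain ⟨h1, h2⟩ := hN n hn
    have hne : (n : ℝ) ≠ 0 := Nat.cast_ne_zero.mpr (by omega)
    have h3 : ((‖E ^ n‖₊ : ENNReal) ^ (1 / (n : ℝ))) ^ (n : ℝ)
        ≤ (ρ : ENNReal) ^ (n : ℝ) := ENNReal.rpow_le_rpow h1.le (Nat.cast_nonneg n)
    rw [← ENNReal.rpow_mul, one_div, inv_mul_cancel₀ hne, ENNReal.rpow_one,
      ENNReal.rpow_natCast] at h3
    have h4 : ‖E ^ n‖₊ ≤ ρ ^ n := by exact_mod_cast h3
    calc ‖E ^ n‖ = ((‖E ^ n‖₊ : ℝ≥0) : ℝ) := rfl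
    _ ≤ ((ρ ^ n : ℝ≥0) : ℝ) := by exact_mod_cast h4
    _ = (ρ : ℝ) ^ n := by push_cast; ring
  set C : ℝ := (∑ k ∈ Finset.range (N + 1), ‖E ^ k‖ / (ρ : ℝ) ^ k) + 1 with hC
  have hsum_nonneg : 0 ≤ ∑ k ∈ Finset.range (N + 1), ‖E ^ k‖ / (ρ : ℝ) ^ k :=
    Finset.sum_nonneg fun k _ => div_nonneg (norm_nonneg _) (by positivity)
  have hC1 : 1 ≤ C := by simp only [hC]; linarith
  refine ⟨C, ρ, hC1, hρpos, hρlt, fun n => ?_⟩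
  rcases le_or_gt n N with hcase | hcase
  · have hmem : n ∈ Finset.range (N + 1) := Finset.mem_range.mpr (by omega)
    have hone : ‖E ^ n‖ / (ρ : ℝ) ^ n ≤ C := by
      have := Finset.single_le_sum
        (f := fun k => ‖E ^ k‖ / (ρ : ℝ) ^ k)
        (fun k _ => div_nonneg (norm_nonneg _) (by positivity)) hmem
      simp only [hC]; linarith
    have hpow : (0:ℝ) < (ρ : ℝ) ^ n := by positivity
    calc ‖E ^ n‖ = (‖E ^ n‖ / (ρ : ℝ) ^ n) * (ρ : ℝ) ^ n := by
          field_simp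
    _ ≤ C * (ρ : ℝ) ^ n := mul_le_mul_of_nonneg_right hone hpow.le
  · calc ‖E ^ n‖ ≤ (ρ : ℝ) ^ n := hbound n (by omega)
    _ ≤ C * (ρ : ℝ) ^ n := le_mul_of_one_le_left (by positivity) hC1

lemma exp_decay (B : Mat) (hd : 0 < d) (hB : ∀ μ ∈ spectrum ℂ B, μ.re < 0) :
    ∃ C ε : ℝ, 0 < ε ∧ ∀ t : ℝ, 0 ≤ t → ‖exp (t • B)‖ ≤ C * Real.exp (-ε * t) := by
  haveI : Nontrivial Mat := matrix_nontrivial hd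
  obtain ⟨lam0, hlam0, hmax⟩ := (spectrum.isCompact (𝕜 := ℂ) B).exists_isMaxOn
    (spectrum.nonempty B) Complex.continuous_re.continuousOn
  set m : ℝ := lam0.re with hm
  have hmneg : m < 0 := hB lam0 hlam0
  have hrad : spectralRadius ℂ (exp B) ≤ ENNReal.ofReal (Real.exp m) := by
    rw [spectralRadius]
    refine iSup₂_le fun μ hμ => ?_
    obtain ⟨lam, hlam, rfl⟩ := spectrum_exp_mem hd hμ
    rw [show ∀ z : ℂ, ((‖z‖₊ : ℝ≥0) : ℝ≥0∞) = ENNReal.ofReal ‖z‖ from fun z => (ofReal_norm z).symm]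
    refine ENNReal.ofReal_le_ofReal ?_
    rw [Complex.norm_exp]
    exact Real.exp_le_exp.mpr (hmax hlam)
  have hexp1 : Real.exp m < 1 := by
    have := Real.exp_lt_exp.mpr hmneg
    simpa using this
  have hlt : spectralRadius ℂ (exp B) < 1 := by
    refine lt_of_le_of_lt hrad ?_
    rw [← ENNReal.ofReal_one]
    exact ENNReal.ofReal_lt_ofReal_iff_of_nonneg (Real.exp_pos m).le |>.mpr hexp1
  obtain ⟨C1, ρ, hC1, hρpos, hρlt, hpow⟩ := norm_pow_le (exp B) hlt
  have hcont : Continuous fun s : ℝ => exp (s • B) :=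
    exp_continuous.comp (continuous_id.smul continuous_const)
  obtain ⟨M0, hM0⟩ := (isCompact_Icc (a := (0:ℝ)) (b := 1)).exists_bound_of_continuousOn
    hcont.continuousOn
  have hM0nn : 0 ≤ M0 := le_trans (norm_nonneg _) (hM0 0 ⟨le_refl _, zero_le_one⟩)
  set ε : ℝ := -Real.log ρ with hε
  have hlog : Real.log ρ < 0 := Real.log_neg hρpos hρlt
  have hεpos : 0 < ε := by simp only [hε]; linarith
  refine ⟨C1 * M0 * Real.exp ε, ε, hεpos, fun t ht => ?_⟩
  set n : ℕ := ⌊t⌋₊ with hn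
  have hn_le : (n : ℝ) ≤ t := Nat.floor_le ht
  have hlt1 : t < n + 1 := Nat.lt_floor_add_one t
  have hsplit : exp (t • B) = exp B ^ n * exp ((t - n) • B) := by
    have hcomm : Commute ((n : ℝ) • B) ((t - (n : ℝ)) • B) :=
      ((Commute.refl B).smul_left _).smul_right _
    have heq : t • B = (n : ℝ) • B + (t - (n : ℝ)) • B := by
      rw [← add_smul]; ring_nf
    rw [heq, Matrix.exp_add_of_commute _ _ hcomm, Nat.cast_smul_eq_nsmul ℝ n B, Matrix.exp_nsmul]
  have hmem : t - (n : ℝ) ∈ Set.Icc (0:ℝ) 1 := ⟨by linarith, by linarith⟩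
  have h5 : ‖exp (t • B)‖ ≤ (C1 * ρ ^ n) * M0 := by
    rw [hsplit]
    refine le_trans (norm_mul_le _ _) (mul_le_mul (hpow n) (hM0 _ hmem) (norm_nonneg _) ?_)
    have : (0:ℝ) < ρ ^ n := by positivity
    nlinarith
  have h6 : ρ ^ n ≤ Real.exp ε * Real.exp (-ε * t) := by
    have hρ_eq : ρ = Real.exp (Real.log ρ) := (Real.exp_log hρpos).symm
    have h7 : ρ ^ n = Real.exp ((n : ℝ) * Real.log ρ) := by
      conv_lhs => rw [hρ_eq]
      rw [← Real.exp_nat_mul]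
    have h8 : (n : ℝ) * Real.log ρ ≤ (t - 1) * Real.log ρ :=
      mul_le_mul_of_nonpos_right (by linarith) hlog.le
    have h9 : (t - 1) * Real.log ρ = ε + -ε * t := by simp only [hε]; ring
    rw [h7, ← Real.exp_add]
    exact Real.exp_le_exp.mpr (by linarith)
  calc ‖exp (t • B)‖ ≤ (C1 * ρ ^ n) * M0 := h5
  _ = (C1 * M0) * ρ ^ n := by ring
  _ ≤ (C1 * M0) * (Real.exp ε * Real.exp (-ε * t)) := by
      refine mul_le_mul_of_nonneg_left h6 ?_
      nlinarith
  _ = C1 * M0 * Real.exp ε * Real.exp (-ε * t) := by ring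

open MeasureTheory in
lemma integral_exp_eq (B : Mat) (hu : IsUnit B)
    {C ε : ℝ} (hε : 0 < ε) (hdecay : ∀ t : ℝ, 0 ≤ t → ‖exp (t • B)‖ ≤ C * Real.exp (-ε * t)) :
    Integrable (fun t : ℝ => exp (t • B)) (volume.restrict (Set.Ioi 0)) ∧
    ∫ t in Set.Ioi (0:ℝ), exp (t • B) = -(B⁻¹) := by
  have hcont : Continuous fun t : ℝ => exp (t • B) :=
    exp_continuous.comp (continuous_id.smul continuous_const)
  have hint : Integrable (fun t : ℝ => exp (t • B)) (volume.restrict (Set.Ioi 0)) := by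
    refine Integrable.mono' ((exp_neg_integrableOn_Ioi 0 hε).const_mul C) ?_ ?_
    · exact hcont.aestronglyMeasurable.restrict
    · rw [ae_restrict_iff' measurableSet_Ioi]
      exact Filter.Eventually.of_forall fun t ht => by
        simpa [mul_comm] using hdecay t (le_of_lt ht)
  refine ⟨hint, ?_⟩
  set u : Matˣ := hu.unit with hu_def
  have huB : (u : Mat) = B := hu.unit_spec
  have hderiv : ∀ t : ℝ, HasDerivAt (fun s : ℝ => (↑u⁻¹ : Mat) * exp (s • B))
      (exp (t • B)) t := by
    intro t
    have h1 : HasDerivAt (fun s : ℝ => (↑u⁻¹ : Mat) * exp (s • B)) ((↑u⁻¹ : Mat) * (B * exp (t • B))) t :=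
      (hasDerivAt_exp_smul_const' (𝕂 := ℝ) B t).const_mul (↑u⁻¹ : Mat)
    have h2 : (↑u⁻¹ : Mat) * (B * exp (t • B)) = exp (t • B) := by
      rw [← mul_assoc, ← huB, Units.inv_mul, one_mul]
    rw [h2] at h1
    have h3 : (exp : Mat → Mat) = exp := rfl
    simpa [h3] using h1
  have htend : Filter.Tendsto (fun t : ℝ => (↑u⁻¹ : Mat) * exp (t • B))
      Filter.atTop (nhds 0) := by
    have h4 : Filter.Tendsto (fun t : ℝ => Real.exp (-ε * t)) Filter.atTop (nhds 0) := by
      have h5 : Filter.Tendsto (fun t : ℝ => -ε * t) Filter.atTop Filter.atBot :=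
        Filter.tendsto_id.const_mul_atTop_of_neg (by linarith)
      exact Real.tendsto_exp_atBot.comp h5
    have h6 : Filter.Tendsto (fun t : ℝ => ‖(↑u⁻¹ : Mat)‖ * (C * Real.exp (-ε * t)))
        Filter.atTop (nhds 0) := by
      have := (h4.const_mul (‖(↑u⁻¹ : Mat)‖ * C))
      simp only [mul_zero] at this
      exact this.congr (fun t => by ring)
    refine squeeze_zero_norm' ?_ h6
    filter_upwards [Filter.eventually_ge_atTop (0:ℝ)] with t ht
    exact le_trans (norm_mul_le _ _)
      (mul_le_mul_of_nonneg_left (hdecay t ht) (norm_nonneg _))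
  have hFTC := integral_Ioi_of_hasDerivAt_of_tendsto
    (f := fun s : ℝ => (↑u⁻¹ : Mat) * exp (s • B)) (a := 0)
    ((continuous_const.mul hcont).continuousWithinAt)
    (fun x _ => hderiv x) hint htend
  rw [hFTC]
  have : (↑u⁻¹ : Mat) = B⁻¹ := by rw [Matrix.coe_units_inv, huB]
  simp [this]

lemma exp_entry_re_eq (A : Matrix (Fin d) (Fin d) ℝ) (ω t : ℝ) (i j : Fin d) :
    ((exp (t • (A.map Complex.ofReal - (Complex.I * ω) • (1 : Mat)))) i j).re
      = Real.cos (ω * t) * (exp (t • A)) i j := by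
  set Ac : Mat := A.map Complex.ofReal with hAc
  set c : ℂ := -(Complex.I * ω * t) with hc
  have h1 : t • (Ac - (Complex.I * ω) • (1 : Mat))
      = (t : ℂ) • Ac + c • (1 : Mat) := by
    rw [← algebraMap_smul ℂ t (Ac - (Complex.I * ω) • (1 : Mat)), smul_sub, smul_smul,
      Complex.coe_algebraMap, sub_eq_add_neg, ← neg_smul]
    congr 2
    rw [hc]; ring
  have hcomm : Commute ((t : ℂ) • Ac) (c • (1 : Mat)) :=
    (Commute.one_right ((t : ℂ) • Ac)).smul_right c
  have h2 : exp (c • (1 : Mat)) = Complex.exp c • (1 : Mat) := by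
    rw [← Algebra.algebraMap_eq_smul_one (A := Mat) c]
    erw [← map_exp (algebraMap ℂ Mat) (continuous_algebraMap ℂ Mat) c,
      Algebra.algebraMap_eq_smul_one, Complex.exp_eq_exp_ℂ]
  have h3 : (t : ℂ) • Ac = (t • A).map Complex.ofReal := by
    ext i' j'
    simp [hAc, Matrix.map_apply, Complex.real_smul]
  have hfcont : Continuous (Complex.ofRealHom.mapMatrix :
      Matrix (Fin d) (Fin d) ℝ → Mat) :=
    continuous_id.matrix_map Complex.continuous_ofReal
  have h4 : exp ((t : ℂ) • Ac) = (exp (t • A)).map Complex.ofReal := by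
    rw [h3]
    have h5 := map_exp (Complex.ofRealHom.mapMatrix :
      Matrix (Fin d) (Fin d) ℝ →+* Mat) hfcont (t • A)
    have h6 : (exp : Mat → Mat) = exp := rfl
    rw [← h6]
    have h7 : (Complex.ofRealHom.mapMatrix : Matrix (Fin d) (Fin d) ℝ →+* Mat) (exp (t • A))
        = (exp (t • A)).map Complex.ofReal := rfl
    have h8 : (Complex.ofRealHom.mapMatrix : Matrix (Fin d) (Fin d) ℝ →+* Mat) (t • A)
        = (t • A).map Complex.ofReal := rfl
    rw [← h8]
    erw [← h5]
    exact h7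
  have hmain : exp (t • (Ac - (Complex.I * ω) • (1 : Mat)))
      = Complex.exp c • ((exp (t • A)).map Complex.ofReal) := by
    rw [h1, Matrix.exp_add_of_commute _ _ hcomm, h2, h4, mul_smul_comm, mul_one]
  rw [hmain]
  have h9 : (Complex.exp c).re = Real.cos (ω * t) := by
    rw [Complex.exp_re]
    simp [hc, Complex.mul_re, Complex.mul_im]
  simp [Matrix.smul_apply, Matrix.map_apply, Complex.mul_re, h9]

noncomputable def entryReCLM (i j : Fin d) : Mat →L[ℝ] ℝ :=
  LinearMap.toContinuousLinearMap
    { toFun := fun M : Mat => (M i j).re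
      map_add' := fun M N => by simp [Matrix.add_apply]
      map_smul' := fun r M => by
        simp [Matrix.smul_apply, Complex.real_smul] }

@[simp] lemma entryReCLM_apply (i j : Fin d) (M : Mat) : entryReCLM i j M = (M i j).re := rfl

end HurwitzAux

/-- For a Hurwitz matrix `A` and `ω ∈ ℝ`, the complex matrix `A − iωI` is invertible and
`Ŝ_A(ω) = −(1/π) Re((A − iωI)⁻¹)` entrywise. -/
theorem cosTransform_eq_re_resolvent {d : ℕ}
    (A : Matrix (Fin d) (Fin d) ℝ) (ω : ℝ)
    (hA : ∀ μ ∈ spectrum ℂ (A.map Complex.ofReal), μ.re < 0) :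
    IsUnit (A.map Complex.ofReal - (Complex.I * ω) • (1 : Matrix (Fin d) (Fin d) ℂ))
    ∧ ∀ i j, cosTransform A ω i j
        = -(1 / Real.pi) *
          (((A.map Complex.ofReal - (Complex.I * ω) • (1 : Matrix (Fin d) (Fin d) ℂ))⁻¹)
            i j).re := by
  classical
  set Ac : Matrix (Fin d) (Fin d) ℂ := A.map Complex.ofReal with hAc
  set B : Matrix (Fin d) (Fin d) ℂ := Ac - (Complex.I * ω) • 1 with hB
  have hBalg : B = Ac - algebraMap ℂ (Matrix (Fin d) (Fin d) ℂ) (Complex.I * ω) := by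
    rw [hB, Algebra.algebraMap_eq_smul_one]
  have hspec : ∀ μ ∈ spectrum ℂ B, μ.re < 0 := by
    intro μ hμ
    have hx : μ + Complex.I * ω ∈ spectrum ℂ Ac := by
      rw [spectrum.mem_iff] at hμ ⊢
      rw [hBalg] at hμ
      convert hμ using 2
      rw [map_add]
      abel
    have h1 := hA _ hx
    have hre : (Complex.I * (ω : ℂ)).re = 0 := by simp
    rw [Complex.add_re, hre, add_zero] at h1
    exact h1
  have hUnit : IsUnit B := by
    by_contra h
    have := hspec 0 ((spectrum.zero_mem_iff (R := ℂ)).mpr h)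
    simp at this
  refine ⟨hUnit, fun i j => ?_⟩
  have hd : 0 < d := i.pos
  obtain ⟨C, ε, hε, hdecay⟩ := HurwitzAux.exp_decay B hd hspec
  obtain ⟨hint, hval⟩ := HurwitzAux.integral_exp_eq B hUnit hε hdecay
  have hLcomm := (HurwitzAux.entryReCLM i j).integral_comp_comm hint
  have hstep1 : (∫ t in Set.Ioi (0:ℝ), Real.cos (ω * t) * (NormedSpace.exp (t • A)) i j)
      = ∫ t in Set.Ioi (0:ℝ), HurwitzAux.entryReCLM i j (NormedSpace.exp (t • B)) := by
    refine integral_congr_ae (Filter.Eventually.of_forall fun t => ?_)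
    show Real.cos (ω * t) * (NormedSpace.exp (t • A)) i j
      = ((NormedSpace.exp (t • B)) i j).re
    exact (HurwitzAux.exp_entry_re_eq A ω t i j).symm
  have hstep2 : cosTransform A ω i j = (1 / Real.pi) *
      ((∫ t in Set.Ioi (0:ℝ), NormedSpace.exp (t • B)) i j).re := by
    rw [cosTransform, Matrix.of_apply, hstep1]
    exact congrArg _ hLcomm
  rw [hstep2, hval]
  simp only [Matrix.neg_apply, Complex.neg_re]
  ring

end Aux
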